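/- Let G be a finite connected graph whose vertex set is partitioned into sets S and I, let k ≥ 1 be an integer, and suppose |S| ≥ |V(G)|/k. Then for any integer t with 1 ≤ t ≤ |V(G)|/2, there exists a subtree T of G with t ≤ |V(T)| ≤ 2t − 1 such that at least a 1/k fraction of the vertices of T lie in S. -/

import Mathlib

namespace StmtAux
open SimpleGraph

variable {V : Type}

lemma acyclic_sup_edge (P : SimpleGraph V) (hP : P.IsAcyclic) (u w : V) (hne : u ≠ w)
    (hw : ∀ x, ¬ P.Adj w x) : (P ⊔ edge u w).IsAcyclic := by
  classical
  intro v c hc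
  by_cases hmem : w ∈ c.support
  · have hc' := hc.rotate hmem
    revert hc'
    generalize c.rotate w hmem = c'
    intro hc'
    cases c' with
    | nil => exact hc'.ne_nil rfl
    | cons h q =>
      rename_i x
      have hxu : ∀ (y : V), (P ⊔ edge u w).Adj w y → y = u := by
        intro y hy
        rcases hy with hy | hy
        · exact absurd hy (hw y)
        · rw [edge_adj] at hy
          rcases hy.1 with ⟨h1, _⟩ | ⟨_, h2⟩
          · exact absurd h1.symm hne
          · exact h2
      have hx : u = x := (hxu x h).symm
      subst hx
      rw [Walk.cons_isCycle_iff] at hc'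
      obtain ⟨hq, hnotmem⟩ := hc'
      have hqrev : ∃ (y : V) (h2 : (P ⊔ edge u w).Adj w y) (q2 : (P ⊔ edge u w).Walk y u),
          q.reverse = Walk.cons h2 q2 := Walk.exists_eq_cons_of_ne (Ne.symm hne) q.reverse
      obtain ⟨y, h2, q2, hq2⟩ := hqrev
      have hy : u = y := (hxu y h2).symm
      subst hy
      apply hnotmem
      have : s(w, u) ∈ q.reverse.edges := by rw [hq2]; simp
      rw [Walk.edges_reverse, List.mem_reverse] at this
      first
      | exact this
      | exact Sym2.eq_swap ▸ this
      | exact Sym2.eq_swap.symm ▸ this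
  · have hPe : ∀ e ∈ c.edges, e ∈ P.edgeSet := by
      intro e he
      induction e with
      | h a b =>
        have hadj : (P ⊔ edge u w).Adj a b := Walk.adj_of_mem_edges c he
        rcases hadj with hadj | hadj
        · exact hadj
        · exfalso
          rw [edge_adj] at hadj
          have haw : w ∈ c.support := by
            rcases hadj.1 with ⟨rfl, rfl⟩ | ⟨rfl, rfl⟩
            · exact Walk.snd_mem_support_of_mem_edges c he
            · exact Walk.fst_mem_support_of_mem_edges c he
          exact hmem haw
    exact hP (c.transfer P hPe) (hc.transfer hPe)

variable {G : SimpleGraph V}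

/-- a subgraph that is a tree, stated via coe-connected and spanningCoe-acyclic -/
def PreTree (H : G.Subgraph) : Prop := H.coe.Connected ∧ H.spanningCoe.IsAcyclic

lemma preTree_singleton (v : V) : PreTree (G.singletonSubgraph v) := by
  constructor
  · exact (SimpleGraph.Subgraph.singletonSubgraph_connected (G := G) (v := v)).coe
  · have : (G.singletonSubgraph v).spanningCoe = ⊥ := by
      ext a b
      simp [Subgraph.spanningCoe, singletonSubgraph_adj]
    rw [this]
    exact isAcyclic_bot

lemma preTree_isTree {H : G.Subgraph} (h : PreTree H) : H.coe.IsTree := by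
  refine ⟨h.1, ?_⟩
  intro v c hc
  let f : H.coe →g H.spanningCoe := ⟨Subtype.val, fun {a b} hab => hab⟩
  have hf : ⇑f = Subtype.val := rfl
  have : (c.map f).IsCycle := by
    rw [Walk.map_isCycle_iff_of_injective]
    · exact hc
    · rw [hf]; exact Subtype.val_injective
  exact h.2 (c.map f) this

lemma preTree_add {H : G.Subgraph} (h : PreTree H) {u w : V} (hu : u ∈ H.verts)
    (hw : w ∉ H.verts) (ha : G.Adj u w) :
    ∃ H' : G.Subgraph, PreTree H' ∧ H'.verts = H.verts ∪ {w} := by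
  refine ⟨H ⊔ G.subgraphOfAdj ha, ⟨?_, ?_⟩, ?_⟩
  · have : (H ⊔ G.subgraphOfAdj ha).Connected := by
      apply Subgraph.connected_sup (⟨h.1⟩ : H.Connected).preconnected (Subgraph.subgraphOfAdj_connected ha).preconnected
      exact ⟨u, hu, by simp⟩
    exact this.coe
  · have heq : (H ⊔ G.subgraphOfAdj ha).spanningCoe = H.spanningCoe ⊔ edge u w := by
      ext a b
      simp only [Subgraph.spanningCoe, Subgraph.sup_adj, subgraphOfAdj_adj, sup_adj, edge_adj]
      constructor
      · rintro (hab | hab)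
        · exact Or.inl hab
        · right
          rw [Sym2.eq_iff] at hab
          rcases hab with ⟨rfl, rfl⟩ | ⟨rfl, rfl⟩
          · exact ⟨Or.inl ⟨rfl, rfl⟩, ha.ne⟩
          · exact ⟨Or.inr ⟨rfl, rfl⟩, ha.ne'⟩
      · rintro (hab | ⟨hab, hne⟩)
        · exact Or.inl hab
        · right
          rw [Sym2.eq_iff]
          tauto
    rw [heq]
    apply acyclic_sup_edge _ h.2 _ _ ha.ne
    intro x hx
    exact hw (hx.fst_mem)
  · simp only [Subgraph.verts_sup, subgraphOfAdj_verts]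
    ext x
    simp only [Set.mem_union, Set.mem_insert_iff, Set.mem_singleton_iff]
    constructor
    · rintro (hx | rfl | rfl)
      · exact Or.inl hx
      · exact Or.inl hu
      · exact Or.inr rfl
    · rintro (hx | rfl)
      · exact Or.inl hx
      · exact Or.inr (Or.inr rfl)


inductive RT (V : Type) : Type where
  | node : V → List (RT V) → RT V

namespace RT

def root : RT V → V
  | node v _ => v

mutual
def verts : RT V → List V
  | .node v cs => v :: vertsL cs
def vertsL : List (RT V) → List V
  | [] => []
  | c :: cs => verts c ++ vertsL cs
end

@[simp] lemma root_node (v : V) (cs : List (RT V)) : root (.node v cs) = v := rfl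

@[simp] lemma verts_node (v : V) (cs : List (RT V)) : verts (.node v cs) = v :: vertsL cs := by
  rw [verts]

@[simp] lemma vertsL_nil : vertsL ([] : List (RT V)) = [] := by rw [vertsL]

@[simp] lemma vertsL_cons (c : RT V) (cs : List (RT V)) :
    vertsL (c :: cs) = verts c ++ vertsL cs := by rw [vertsL]

lemma vertsL_append (l₁ l₂ : List (RT V)) :
    vertsL (l₁ ++ l₂) = vertsL l₁ ++ vertsL l₂ := by
  induction l₁ with
  | nil => simp
  | cons c l ih => simp [ih]

@[simp] lemma root_mem_verts (T : RT V) : root T ∈ verts T := by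
  cases T with
  | node v cs => simp [root]

lemma verts_ne_nil (T : RT V) : verts T ≠ [] := by
  cases T with
  | node v cs => simp

lemma mem_vertsL_of_mem {c : RT V} {l : List (RT V)} (hc : c ∈ l) {x : V}
    (hx : x ∈ verts c) : x ∈ vertsL l := by
  induction l with
  | nil => simp at hc
  | cons d l ih =>
    rcases List.mem_cons.mp hc with rfl | hc
    · simp [hx]
    · simp [ih hc]

end RT

open RT

inductive WF (G : SimpleGraph V) : RT V → Prop where
  | node : ∀ (v : V) (cs : List (RT V)), (∀ c ∈ cs, G.Adj v (root c)) →
      (∀ c ∈ cs, WF G c) → WF G (.node v cs)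

lemma WF.adj_of {G : SimpleGraph V} {v : V} {cs : List (RT V)}
    (h : WF G (.node v cs)) : ∀ c ∈ cs, G.Adj v (root c) := by
  cases h; assumption

lemma WF.wf_of {G : SimpleGraph V} {v : V} {cs : List (RT V)}
    (h : WF G (.node v cs)) : ∀ c ∈ cs, WF G c := by
  cases h; assumption

variable [DecidableEq V] {G : SimpleGraph V}

/-- connected via a wellformed tree -/
def ConnA (G : SimpleGraph V) (A : Finset V) : Prop :=
  ∃ T : RT V, WF G T ∧ (verts T).Nodup ∧ (verts T).toFinset = A


lemma attach_forest :
    ∀ (n : ℕ) (l : List (RT V)), (vertsL l).length ≤ n → (∀ c ∈ l, WF G c) →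
    (vertsL l).Nodup →
    ∀ (K : G.Subgraph), PreTree K → (∀ x ∈ vertsL l, x ∉ K.verts) →
    ∀ u, u ∈ K.verts → (∀ c ∈ l, G.Adj u (root c)) →
    ∃ K' : G.Subgraph, PreTree K' ∧ K'.verts = K.verts ∪ {x | x ∈ vertsL l} := by
  intro n
  induction n with
  | zero =>
    intro l hlen _ _ K hK _ u hu _
    refine ⟨K, hK, ?_⟩
    have : vertsL l = [] := List.length_eq_zero_iff.mp (Nat.le_zero.mp hlen)
    rw [this]
    simp
  | succ n IH =>
    intro l hlen hwf hnd K hK hdisj u hu hadj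
    match l with
    | [] =>
      refine ⟨K, hK, ?_⟩
      simp
    | c :: rest =>
      match c with
      | .node v cs =>
        have hvirts : vertsL (RT.node v cs :: rest) = (v :: vertsL cs) ++ vertsL rest := by
          simp
        rw [hvirts] at hnd hdisj hlen
        -- add v
        have hvK : v ∉ K.verts := hdisj v (by simp)
        have hadjv : G.Adj u v := by
          have := hadj (RT.node v cs) (List.mem_cons_self)
          simpa using this
        obtain ⟨K₁, hK₁, hK₁v⟩ := preTree_add hK hu hvK hadjv
        have hvK₁ : v ∈ K₁.verts := by rw [hK₁v]; exact Or.inr rfl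
        -- attach cs
        have hndcs : (vertsL cs).Nodup := ((List.nodup_cons.mp (hnd.of_append_left)).2)
        obtain ⟨K₂, hK₂, hK₂v⟩ := IH cs (by simp at hlen; omega) ((hwf (RT.node v cs) (List.mem_cons_self)).wf_of)
          hndcs K₁ hK₁
          (by
            intro x hx
            rw [hK₁v]
            rintro (hxK | rfl)
            · exact hdisj x (by simp [hx]) hxK
            · exact (List.nodup_cons.mp (hnd.of_append_left)).1 hx)
          v hvK₁ ((hwf (RT.node v cs) (List.mem_cons_self)).adj_of)
        have hvK₂ : u ∈ K₂.verts := by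
          rw [hK₂v, hK₁v]; exact Or.inl (Or.inl hu)
        -- attach rest
        obtain ⟨K₃, hK₃, hK₃v⟩ := IH rest (by simp at hlen ⊢; omega)
          (fun c hc => hwf c (by simp [hc])) (hnd.of_append_right) K₂ hK₂
          (by
            intro x hx
            rw [hK₂v, hK₁v]
            rintro ((hxK | rfl) | hxcs)
            · exact hdisj x (by simp [hx]) hxK
            · exact (List.disjoint_of_nodup_append hnd) (by simp) hx
            · exact (List.disjoint_of_nodup_append hnd)
                (List.mem_cons_of_mem _ (by exact hxcs)) hx)
          u hvK₂ (fun c hc => hadj c (by simp [hc]))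
        refine ⟨K₃, hK₃, ?_⟩
        rw [hK₃v, hK₂v, hK₁v]
        ext x
        simp only [Set.mem_union, Set.mem_setOf_eq, Set.mem_singleton_iff, List.mem_append,
          List.mem_cons, vertsL_cons, verts_node]
        tauto

lemma connA_subgraph {A : Finset V} (h : ConnA G A) :
    ∃ H : G.Subgraph, H.coe.IsTree ∧ H.verts = ↑A := by
  obtain ⟨T, hwf, hnd, hA⟩ := h
  match T with
  | .node v cs =>
    have hK : PreTree (G.singletonSubgraph v) := preTree_singleton v
    simp only [verts_node] at hnd hA
    obtain ⟨K', hK', hKv⟩ := attach_forest (vertsL cs).length cs le_rfl hwf.wf_of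
      (List.nodup_cons.mp hnd).2 _ hK
      (by
        intro x hx
        simp only [singletonSubgraph_verts, Set.mem_singleton_iff]
        intro hxv
        exact (List.nodup_cons.mp hnd).1 (hxv ▸ hx))
      v (by simp) hwf.adj_of
    refine ⟨K', preTree_isTree hK', ?_⟩
    rw [hKv]
    rw [← hA]
    ext x
    simp [Set.mem_union]
    try tauto

lemma crossing_aux {A : Set V} :
    ∀ {x y : V} (_ : G.Walk x y), x ∈ A → y ∉ A →
    ∃ u ∈ A, ∃ w, w ∉ A ∧ G.Adj u w := by
  intro x y p
  induction p with
  | nil => intro hx hy; exact absurd hx hy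
  | @cons a b c h p ih =>
    intro hx hy
    by_cases hb : b ∈ A
    · exact ih hb hy
    · exact ⟨a, hx, b, hb, h⟩

mutual
def ins (u w : V) : RT V → RT V
  | .node v cs => if v = u then .node v (.node w [] :: cs) else .node v (insL u w cs)
def insL (u w : V) : List (RT V) → List (RT V)
  | [] => []
  | c :: cs => if u ∈ verts c then ins u w c :: cs else c :: insL u w cs
end

mutual
lemma ins_spec (u w : V) (hG : G.Adj u w) :
    ∀ (T : RT V), WF G T → u ∈ verts T →
      WF G (ins u w T) ∧ (verts (ins u w T)).Perm (w :: verts T) ∧ root (ins u w T) = root T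
  | .node v cs, hwf, hu => by
    rw [ins]
    split_ifs with hv
    · subst hv
      refine ⟨?_, ?_, rfl⟩
      · refine WF.node _ _ ?_ ?_
        · intro c hc
          rcases List.mem_cons.mp hc with rfl | hc
          · simpa using hG
          · exact hwf.adj_of c hc
        · intro c hc
          rcases List.mem_cons.mp hc with rfl | hc
          · exact WF.node _ _ (by simp) (by simp)
          · exact hwf.wf_of c hc
      · have e1 : verts (RT.node v (RT.node w [] :: cs)) = v :: w :: vertsL cs := by simp
        have e2 : verts (RT.node v cs) = v :: vertsL cs := by simp
        rw [e1, e2]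
        exact List.Perm.swap w v (vertsL cs)
    · have hu' : u ∈ vertsL cs := by
        rcases List.mem_cons.mp (by simpa using hu) with rfl | h
        · exact absurd rfl hv
        · exact h
      obtain ⟨h1, h2, h3⟩ := insL_spec u w hG cs hwf.wf_of hu'
      refine ⟨WF.node _ _ (h3 v hwf.adj_of) h1, ?_, rfl⟩
      have e1 : verts (RT.node v (insL u w cs)) = v :: vertsL (insL u w cs) := by simp
      have e2 : verts (RT.node v cs) = v :: vertsL cs := by simp
      rw [e1, e2]
      exact (List.Perm.cons v h2).trans (List.Perm.swap w v (vertsL cs))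

lemma insL_spec (u w : V) (hG : G.Adj u w) :
    ∀ (l : List (RT V)), (∀ c ∈ l, WF G c) → u ∈ vertsL l →
      (∀ c ∈ insL u w l, WF G c) ∧
        (vertsL (insL u w l)).Perm (w :: vertsL l) ∧
        (∀ v₀ : V, (∀ c ∈ l, G.Adj v₀ (root c)) → ∀ c ∈ insL u w l, G.Adj v₀ (root c))
  | [], _, hu => by simp at hu
  | c :: cs, hwf, hu => by
    rw [insL]
    split_ifs with hc
    · obtain ⟨g1, g2, g3⟩ := ins_spec u w hG c (hwf c (by simp)) hc
      refine ⟨?_, ?_, ?_⟩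
      · intro d hd
        rcases List.mem_cons.mp hd with rfl | hd
        · exact g1
        · exact hwf d (by simp [hd])
      · have e1 : vertsL (ins u w c :: cs) = verts (ins u w c) ++ vertsL cs := by simp
        have e2 : vertsL (c :: cs) = verts c ++ vertsL cs := by simp
        rw [e1, e2]
        exact g2.append_right (vertsL cs)
      · intro v₀ h d hd
        rcases List.mem_cons.mp hd with rfl | hd
        · rw [g3]; exact h c (by simp)
        · exact h d (by simp [hd])
    · have hu' : u ∈ vertsL cs := by
        rcases List.mem_append.mp (by simpa using hu) with h | h
        · exact absurd h hc
        · exact h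
      obtain ⟨g1, g2, g3⟩ := insL_spec u w hG cs (fun d hd => hwf d (by simp [hd])) hu'
      refine ⟨?_, ?_, ?_⟩
      · intro d hd
        rcases List.mem_cons.mp hd with rfl | hd
        · exact hwf d (by simp)
        · exact g1 d hd
      · have e1 : vertsL (c :: insL u w cs) = verts c ++ vertsL (insL u w cs) := by simp
        have e2 : vertsL (c :: cs) = verts c ++ vertsL cs := by simp
        rw [e1, e2]
        exact (List.Perm.append_left (verts c) g2).trans List.perm_middle
      · intro v₀ h d hd
        rcases List.mem_cons.mp hd with rfl | hd
        · exact h d (by simp)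
        · exact g3 v₀ (fun e he => h e (by simp [he])) d hd
end
lemma spanning [Fintype V] (hconn : G.Connected) :
    ∃ T : RT V, WF G T ∧ (verts T).Nodup ∧ (verts T).toFinset = Finset.univ := by
  classical
  obtain ⟨v0⟩ := hconn.nonempty
  suffices h : ∀ (n : ℕ) (T : RT V), WF G T → (verts T).Nodup →
      Fintype.card V ≤ (verts T).length + n →
      ∃ T' : RT V, WF G T' ∧ (verts T').Nodup ∧ (verts T').toFinset = Finset.univ by
    obtain ⟨T', h1, h2, h3⟩ := h (Fintype.card V) (RT.node v0 []) (WF.node _ _ (by simp) (by simp))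
      (by simp) (by simp)
    exact ⟨T', h1, h2, h3⟩
  intro n
  induction n with
  | zero =>
    intro T hwf hnd hcard
    refine ⟨T, hwf, hnd, ?_⟩
    apply Finset.eq_univ_of_card
    rw [List.toFinset_card_of_nodup hnd]
    have := List.Nodup.length_le_card hnd
    omega
  | succ n IH =>
    intro T hwf hnd hcard
    by_cases hall : ∀ x : V, x ∈ verts T
    · refine ⟨T, hwf, hnd, Finset.eq_univ_iff_forall.mpr (by simpa using hall)⟩
    · push_neg at hall
      obtain ⟨b, hb⟩ := hall
      have hroot : root T ∈ {x : V | x ∈ verts T} := root_mem_verts T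
      obtain ⟨u, hu, w, hw, hadj⟩ := crossing_aux ((hconn.preconnected (root T) b).some)
        hroot hb
      obtain ⟨h1, h2, _⟩ := ins_spec u w hadj T hwf hu
      apply IH (ins u w T) h1
      · rw [h2.nodup_iff]
        exact List.Nodup.cons hw hnd
      · rw [h2.length_eq]
        simp only [List.length_cons]
        omega

lemma drop_step (k χ D' S' da sa : ℕ) (hk : 1 ≤ k) (hχ : χ ≤ 1) (hD' : 1 ≤ D')
    (hmin : sa * (D' + da) ≤ (S' + sa) * da)
    (hinv : 1 + (D' + da) ≤ k * (χ + (S' + sa))) :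
    1 + D' ≤ k * (χ + S') := by
  by_contra hcon
  push_neg at hcon
  interval_cases χ
  · zify at hmin hinv hcon
    have h1 : (k : ℤ) * sa * (D' + da) ≤ k * ((S' + sa) * da) := by
      have := mul_le_mul_of_nonneg_left hmin (by positivity : (0:ℤ) ≤ k)
      linarith
    have h2 : (1 + (D' + da) : ℤ) * D' ≤ k * (0 + (S' + sa)) * D' := by
      apply mul_le_mul_of_nonneg_right hinv
      positivity
    have h3 : (k : ℤ) * (0 + S') * (D' + da) ≤ D' * (D' + da) := by
      apply mul_le_mul_of_nonneg_right
      · linarith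
      · positivity
    nlinarith [h1, h2, h3]
  · zify at hmin hinv hcon
    have h1 : (k : ℤ) * sa * (D' + da) ≤ k * ((S' + sa) * da) := by
      have := mul_le_mul_of_nonneg_left hmin (by positivity : (0:ℤ) ≤ k)
      linarith
    have h2 : (1 + (D' + da) : ℤ) * D' ≤ k * (1 + (S' + sa)) * D' := by
      apply mul_le_mul_of_nonneg_right hinv
      positivity
    have h3 : (k : ℤ) * (1 + S') * (D' + da) ≤ D' * (D' + da) := by
      apply mul_le_mul_of_nonneg_right
      · linarith
      · positivity
    nlinarith [h1, h2, h3]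

lemma min_density {α : Type} (d s : α → ℕ) (L : List α) (hL : L ≠ []) :
    ∃ a ∈ L, s a * (L.map d).sum ≤ (L.map s).sum * d a := by
  by_contra hcon
  push_neg at hcon
  have h1 : (L.map (fun a => (L.map s).sum * d a)).sum <
      (L.map (fun a => s a * (L.map d).sum)).sum := by
    apply List.sum_lt_sum
    · intro i hi
      exact le_of_lt (hcon i hi)
    · match L, hL with
      | a :: l, _ => exact ⟨a, by simp, hcon a (by simp)⟩
  rw [List.sum_map_mul_left] at h1
  have h2 : (L.map (fun a => s a * (L.map d).sum)).sum = (L.map s).sum * (L.map d).sum := by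
    have := List.sum_map_mul_right L s ((L.map d).sum)
    simpa using this
  rw [h2] at h1
  exact lt_irrefl _ h1

lemma blocks {α : Type} [DecidableEq α] (d s : α → ℕ) (k χ t : ℕ)
    (hk : 1 ≤ k) (hχ : χ ≤ 1) (ht : 2 ≤ t) :
    ∀ (n : ℕ) (L : List α), L.length ≤ n → (∀ a ∈ L, 1 ≤ d a ∧ d a ≤ t - 1) →
      t ≤ 1 + (L.map d).sum → 1 + (L.map d).sum ≤ k * (χ + (L.map s).sum) →
      ∃ J : List α, J.Sublist L ∧ t ≤ 1 + (J.map d).sum ∧ 1 + (J.map d).sum ≤ 2 * t - 1 ∧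
        1 + (J.map d).sum ≤ k * (χ + (J.map s).sum) := by
  intro n
  induction n with
  | zero =>
    intro L hlen hd hlow hinv
    have hL : L = [] := List.length_eq_zero_iff.mp (Nat.le_zero.mp hlen)
    subst hL
    simp at hlow
    omega
  | succ n IH =>
    intro L hlen hd hlow hinv
    by_cases hsmall : 1 + (L.map d).sum ≤ 2 * t - 1
    · exact ⟨L, List.Sublist.refl L, hlow, hsmall, hinv⟩
    · push_neg at hsmall
      have hLne : L ≠ [] := by
        intro h
        subst h
        simp at hsmall
        omega
      obtain ⟨a, ha, hmin⟩ := min_density d s L hLne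
      have hperm : L.Perm (a :: L.erase a) := List.perm_cons_erase ha
      have hd_sum : (L.map d).sum = d a + ((L.erase a).map d).sum := by
        have := (hperm.map d).sum_eq
        simpa using this
      have hs_sum : (L.map s).sum = s a + ((L.erase a).map s).sum := by
        have := (hperm.map s).sum_eq
        simpa using this
      have hda := hd a ha
      have hlen' : (L.erase a).length ≤ n := by
        rw [List.length_erase, if_pos ha]
        have : 1 ≤ L.length := by
          cases L
          · exact absurd rfl hLne
          · simp
        omega
      have hlow' : t ≤ 1 + ((L.erase a).map d).sum := by omega
      have hinv' : 1 + ((L.erase a).map d).sum ≤ k * (χ + ((L.erase a).map s).sum) := by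
        have e1 : (L.map d).sum = ((L.erase a).map d).sum + d a := by omega
        have e2 : (L.map s).sum = ((L.erase a).map s).sum + s a := by omega
        rw [e1, e2] at hmin hinv
        exact drop_step k χ _ _ (d a) (s a) hk hχ (by omega) hmin hinv
      obtain ⟨J, hJ, h1, h2, h3⟩ := IH (L.erase a) hlen'
        (fun b hb => hd b ((List.erase_sublist (a := a) (l := L)).mem hb)) hlow' hinv'
      exact ⟨J, hJ.trans (List.erase_sublist (a := a) (l := L)), h1, h2, h3⟩


lemma mem_vertsL_iff {x : V} {l : List (RT V)} :
    x ∈ vertsL l ↔ ∃ c ∈ l, x ∈ verts c := by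
  induction l with
  | nil => simp
  | cons c cs ih =>
    simp only [vertsL_cons, List.mem_append, ih, List.mem_cons]
    constructor
    · rintro (h | ⟨c', hc', hx⟩)
      · exact ⟨c, Or.inl rfl, h⟩
      · exact ⟨c', Or.inr hc', hx⟩
    · rintro ⟨c', rfl | hc', hx⟩
      · exact Or.inl hx
      · exact Or.inr ⟨c', hc', hx⟩

lemma vertsL_sublist {l' l : List (RT V)} (h : l'.Sublist l) :
    (vertsL l').Sublist (vertsL l) := by
  induction h with
  | slnil => simp
  | cons a h ih =>
    simp only [vertsL_cons]
    exact ih.trans (List.sublist_append_right _ _)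
  | cons_cons a h ih =>
    simp only [vertsL_cons]
    exact List.Sublist.append (List.Sublist.refl _) ih

lemma foldr_union_mem (Qs : List (Finset V)) (x : V) :
    x ∈ Qs.foldr (· ∪ ·) ∅ ↔ ∃ P ∈ Qs, x ∈ P := by
  induction Qs with
  | nil => simp
  | cons P Qs ih =>
    simp only [List.foldr_cons, Finset.mem_union, ih, List.mem_cons]
    constructor
    · rintro (h | ⟨Q, hQ, hx⟩)
      · exact ⟨P, Or.inl rfl, h⟩
      · exact ⟨Q, Or.inr hQ, hx⟩
    · rintro ⟨Q, rfl | hQ, hx⟩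
      · exact Or.inl hx
      · exact Or.inr ⟨Q, hQ, hx⟩

lemma foldr_union_card (Qs : List (Finset V))
    (hpw : List.Pairwise (fun P Q => Disjoint P Q) Qs) :
    (Qs.foldr (· ∪ ·) ∅).card = (Qs.map Finset.card).sum := by
  induction Qs with
  | nil => simp
  | cons P Qs ih =>
    have hdis : Disjoint P (Qs.foldr (· ∪ ·) ∅) := by
      rw [Finset.disjoint_left]
      intro x hx hx'
      obtain ⟨Q, hQ, hxQ⟩ := (foldr_union_mem Qs x).mp hx'
      exact (Finset.disjoint_left.mp ((List.pairwise_cons.mp hpw).1 Q hQ)) hx hxQ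
    simp only [List.foldr_cons, List.map_cons, List.sum_cons]
    rw [Finset.card_union_of_disjoint hdis, ih (List.pairwise_cons.mp hpw).2]

lemma nodup_pairwise_disjoint (cs : List (RT V)) (hnd : (vertsL cs).Nodup) :
    List.Pairwise (fun c d : RT V => ∀ x ∈ verts c, x ∉ verts d) cs := by
  induction cs with
  | nil => simp
  | cons c cs ih =>
    rw [vertsL_cons] at hnd
    rw [List.pairwise_cons]
    constructor
    · intro d hd x hxc hxd
      exact (List.disjoint_of_nodup_append hnd) hxc (mem_vertsL_of_mem hd hxd)
    · exact ih hnd.of_append_right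

set_option maxHeartbeats 1600000 in
theorem desc (t : ℕ) (ht : 1 ≤ t) :
    ∀ (n : ℕ) (T : RT V), (verts T).length ≤ n → WF G T → (verts T).Nodup →
    ∀ (R : Finset V), (∀ x ∈ verts T, x ∉ R) → t ≤ (verts T).length →
    (∀ T' : RT V, WF G T' → (verts T').Nodup → root T' = root T →
        (∀ x ∈ verts T', x ∈ verts T) → ConnA G (R ∪ (verts T').toFinset)) →
    (R = ∅ ∨ ConnA G R) →
    ((∃ A B : Finset V, A ∪ B = R ∪ (verts T).toFinset ∧ Disjoint A B ∧
        t ≤ A.card ∧ t ≤ B.card ∧ ConnA G A ∧ ConnA G B) ∨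
      (∃ (v : V) (Ps : List (Finset V)),
        R ∪ (verts T).toFinset = insert v (Ps.foldr (· ∪ ·) ∅) ∧
        (∀ P ∈ Ps, v ∉ P) ∧ List.Pairwise (fun P Q => Disjoint P Q) Ps ∧
        (∀ P ∈ Ps, 1 ≤ P.card ∧ P.card ≤ t - 1) ∧
        (∀ Qs : List (Finset V), Qs.Sublist Ps →
          ConnA G (insert v (Qs.foldr (· ∪ ·) ∅))))) := by
  intro n
  induction n with
  | zero =>
    intro T hlen _ _ _ _ _ _ _
    have h1 : verts T ≠ [] := verts_ne_nil T
    have : 0 < (verts T).length := List.length_pos_iff.mpr h1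
    omega
  | succ n IH =>
    intro T hlen hwf hnd R hdisj hsz HR2 HR3
    cases T with
    | node v cs =>
    by_cases hbig : ∃ c ∈ cs, t ≤ (verts c).length
    · -- descend into a big child
      obtain ⟨c, hcmem, hct⟩ := hbig
      obtain ⟨l1, l2, hcs⟩ := List.append_of_mem hcmem
      subst hcs
      -- list structure of verts
      have hvT : verts (RT.node v (l1 ++ c :: l2)) =
          v :: (vertsL l1 ++ (verts c ++ vertsL l2)) := by
        simp [vertsL_append]
      rw [hvT] at hnd hdisj hlen
      have hvnot : v ∉ vertsL l1 ++ (verts c ++ vertsL l2) := (List.nodup_cons.mp hnd).1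
      have hnd2 : (vertsL l1 ++ (verts c ++ vertsL l2)).Nodup := (List.nodup_cons.mp hnd).2
      have h1 := List.nodup_append.mp hnd2
      have h2 := List.nodup_append.mp h1.2.1
      -- the new outer set
      set R' : Finset V := R ∪ insert v (vertsL (l1 ++ l2)).toFinset with hR'
      have hmemR' : ∀ x : V, x ∈ R' ↔ (x ∈ R ∨ x = v ∨ x ∈ vertsL l1 ∨ x ∈ vertsL l2) := by
        intro x
        simp only [hR', vertsL_append, Finset.mem_union, Finset.mem_insert,
          List.mem_toFinset, List.mem_append] <;> tauto
      -- sibling tree is WF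
      have hsibadj : ∀ d ∈ l1 ++ l2, G.Adj v (root d) := by
        intro d hd
        apply hwf.adj_of
        rcases List.mem_append.mp hd with h | h
        · exact List.mem_append.mpr (Or.inl h)
        · exact List.mem_append.mpr (Or.inr (List.mem_cons_of_mem _ h))
      have hsibwf : ∀ d ∈ l1 ++ l2, WF G d := by
        intro d hd
        apply hwf.wf_of
        rcases List.mem_append.mp hd with h | h
        · exact List.mem_append.mpr (Or.inl h)
        · exact List.mem_append.mpr (Or.inr (List.mem_cons_of_mem _ h))
      have hsibverts : ∀ x ∈ vertsL (l1 ++ l2), x ∈ vertsL l1 ∨ x ∈ vertsL l2 := by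
        intro x hx
        rw [vertsL_append] at hx
        exact List.mem_append.mp hx
      have hsibnd : (v :: vertsL (l1 ++ l2)).Nodup := by
        rw [List.nodup_cons, vertsL_append]
        constructor
        · intro hx
          apply hvnot
          rcases List.mem_append.mp hx with h | h
          · exact List.mem_append.mpr (Or.inl h)
          · exact List.mem_append.mpr (Or.inr (List.mem_append.mpr (Or.inr h)))
        · rw [List.nodup_append]
          refine ⟨h1.1, h2.2.1, ?_⟩
          intro x hx1 y hx2 hxy
          exact h1.2.2 x hx1 y (List.mem_append.mpr (Or.inr hx2)) hxy
      -- disjointness facts about c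
      have hc_nd : (verts c).Nodup := h2.1
      have hc_v : ∀ x ∈ verts c, x ≠ v := by
        intro x hx hxv
        exact hvnot (hxv ▸ List.mem_append.mpr (Or.inr (List.mem_append.mpr (Or.inl hx))))
      have hc_l1 : ∀ x ∈ verts c, x ∉ vertsL l1 := by
        intro x hx hxl
        exact h1.2.2 x hxl x (List.mem_append.mpr (Or.inl hx)) rfl
      have hc_l2 : ∀ x ∈ verts c, x ∉ vertsL l2 := by
        intro x hx hxl
        exact h2.2.2 x hx x hxl rfl
      -- apply IH to c
      have hres := IH c
        (by
          have := @List.length_append _ (vertsL l1) (verts c ++ vertsL l2)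
          have := @List.length_append _ (verts c) (vertsL l2)
          simp only [List.length_cons] at hlen
          omega)
        (hwf.wf_of c hcmem) hc_nd R'
        (by
          intro x hx
          rw [hmemR']
          push_neg
          exact ⟨hdisj x (List.mem_cons_of_mem _
            (List.mem_append.mpr (Or.inr (List.mem_append.mpr (Or.inl hx))))),
            hc_v x hx, hc_l1 x hx, hc_l2 x hx⟩)
        hct
        (by
          -- HR2 for c with outer set R'
          intro T' hwf' hnd' hroot' hsub'
          have hT'c : ∀ x ∈ verts T', x ∈ verts c := hsub'
          have hwf'' : WF G (RT.node v (T' :: (l1 ++ l2))) := by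
            refine WF.node _ _ ?_ ?_
            · intro d hd
              rcases List.mem_cons.mp hd with rfl | hd
              · rw [hroot']
                exact hwf.adj_of c hcmem
              · exact hsibadj d hd
            · intro d hd
              rcases List.mem_cons.mp hd with rfl | hd
              · exact hwf'
              · exact hsibwf d hd
          have hnd'' : (verts (RT.node v (T' :: (l1 ++ l2)))).Nodup := by
            rw [verts_node, vertsL_cons, vertsL_append]
            rw [List.nodup_cons]
            constructor
            · intro hx
              rcases List.mem_append.mp hx with h | h
              · exact hc_v v (hT'c v h) rfl
              · apply hvnot
                rcases List.mem_append.mp h with h | h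
                · exact List.mem_append.mpr (Or.inl h)
                · exact List.mem_append.mpr (Or.inr (List.mem_append.mpr (Or.inr h)))
            · rw [List.nodup_append]
              refine ⟨hnd', ?_, ?_⟩
              · rw [List.nodup_append]
                refine ⟨h1.1, h2.2.1, ?_⟩
                intro x hx1 y hx2 hxy
                exact h1.2.2 x hx1 y (List.mem_append.mpr (Or.inr hx2)) hxy
              · intro x hx1 y hx2 hxy
                subst hxy
                rcases List.mem_append.mp hx2 with h | h
                · exact hc_l1 x (hT'c x hx1) h
                · exact hc_l2 x (hT'c x hx1) h
          have hconn := HR2 (RT.node v (T' :: (l1 ++ l2))) hwf'' hnd''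
            (by simp)
            (by
              intro x hx
              rw [verts_node, vertsL_cons, vertsL_append] at hx
              rw [hvT]
              rcases List.mem_cons.mp hx with rfl | hx
              · exact List.mem_cons_self
              · apply List.mem_cons_of_mem
                rcases List.mem_append.mp hx with h | h
                · exact List.mem_append.mpr (Or.inr (List.mem_append.mpr (Or.inl (hT'c x h))))
                · rcases List.mem_append.mp h with h | h
                  · exact List.mem_append.mpr (Or.inl h)
                  · exact List.mem_append.mpr (Or.inr (List.mem_append.mpr (Or.inr h))))
          have heq : R ∪ (verts (RT.node v (T' :: (l1 ++ l2)))).toFinset =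
              R' ∪ (verts T').toFinset := by
            ext x
            rw [verts_node, vertsL_cons, vertsL_append]
            simp only [Finset.mem_union, hmemR', List.mem_toFinset, List.mem_cons,
              List.mem_append] <;> tauto
          rwa [heq] at hconn)
        (by
          -- HR3 for R'
          right
          have hconn := HR2 (RT.node v (l1 ++ l2))
            (WF.node _ _ hsibadj hsibwf) (by rw [verts_node]; exact hsibnd)
            (by simp)
            (by
              intro x hx
              rw [verts_node, vertsL_append] at hx
              rw [hvT]
              rcases List.mem_cons.mp hx with rfl | hx
              · exact List.mem_cons_self
              · apply List.mem_cons_of_mem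
                rcases List.mem_append.mp hx with h | h
                · exact List.mem_append.mpr (Or.inl h)
                · exact List.mem_append.mpr (Or.inr (List.mem_append.mpr (Or.inr h))))
          have heq : R ∪ (verts (RT.node v (l1 ++ l2))).toFinset = R' := by
            ext x
            rw [verts_node, vertsL_append]
            simp only [Finset.mem_union, hmemR', List.mem_toFinset, List.mem_cons,
              List.mem_append] <;> tauto
          rwa [heq] at hconn)
      -- transfer the conclusion
      have heq : R' ∪ (verts c).toFinset =
          R ∪ (verts (RT.node v (l1 ++ c :: l2))).toFinset := by
        ext x
        rw [hvT]
        simp only [Finset.mem_union, hmemR', List.mem_toFinset, List.mem_cons,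
          List.mem_append] <;> tauto
      rwa [heq] at hres
    · -- all children are small
      push_neg at hbig
      by_cases hR : t ≤ R.card
      · -- split branch
        left
        refine ⟨(verts (RT.node v cs)).toFinset, R, ?_, ?_, ?_, hR, ?_, ?_⟩
        · rw [Finset.union_comm]
        · rw [Finset.disjoint_left]
          intro x hx
          exact hdisj x (List.mem_toFinset.mp hx)
        · rw [List.toFinset_card_of_nodup hnd]
          exact hsz
        · exact ⟨RT.node v cs, hwf, hnd, rfl⟩
        · rcases HR3 with rfl | h
          · simp at hR
            omega
          · exact h
      · -- centroid branch
        right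
        push_neg at hR
        have hndL : v ∉ vertsL cs ∧ (vertsL cs).Nodup := by
          rw [verts_node, List.nodup_cons] at hnd
          exact hnd
        refine ⟨v, (cs.map fun c => (verts c).toFinset) ++ (if R = ∅ then [] else [R]),
          ?_, ?_, ?_, ?_, ?_⟩
        · -- cover
          ext x
          rw [Finset.mem_union, Finset.mem_insert, foldr_union_mem]
          simp only [verts_node, List.mem_toFinset, List.mem_cons, List.mem_append,
            List.mem_map]
          constructor
          · rintro (hx | rfl | hx)
            · right
              refine ⟨R, ?_, hx⟩
              right
              have : R ≠ ∅ := by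
                intro h
                rw [h] at hx
                simp at hx
              rw [if_neg this]
              simp
            · exact Or.inl rfl
            · obtain ⟨c, hc, hxc⟩ := mem_vertsL_iff.mp hx
              exact Or.inr ⟨(verts c).toFinset, Or.inl ⟨c, hc, rfl⟩, List.mem_toFinset.mpr hxc⟩
          · rintro (rfl | ⟨P, hP | hP, hxP⟩)
            · exact Or.inr (Or.inl rfl)
            · obtain ⟨c, hc, rfl⟩ := hP
              exact Or.inr (Or.inr (mem_vertsL_of_mem hc (List.mem_toFinset.mp hxP)))
            · by_cases hRe : R = ∅
              · rw [if_pos hRe] at hP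
                simp at hP
              · rw [if_neg hRe] at hP
                simp at hP
                subst hP
                exact Or.inl hxP
        · -- v not in pieces
          intro P hP
          rcases List.mem_append.mp hP with hP | hP
          · obtain ⟨c, hc, rfl⟩ := List.mem_map.mp hP
            intro hv
            exact hndL.1 (mem_vertsL_of_mem hc (List.mem_toFinset.mp hv))
          · by_cases hRe : R = ∅
            · rw [if_pos hRe] at hP
              simp at hP
            · rw [if_neg hRe] at hP
              simp at hP
              subst hP
              exact hdisj v (by simp)
        · -- pairwise disjoint
          rw [List.pairwise_append]
          refine ⟨?_, ?_, ?_⟩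
          · have hpw := nodup_pairwise_disjoint cs hndL.2
            refine List.Pairwise.map _ ?_ hpw
            intro c d hcd
            rw [Finset.disjoint_left]
            intro x hx hx'
            exact hcd x (List.mem_toFinset.mp hx) (List.mem_toFinset.mp hx')
          · by_cases hRe : R = ∅
            · rw [if_pos hRe]
              simp
            · rw [if_neg hRe]
              simp
          · intro P hP Q hQ
            by_cases hRe : R = ∅
            · rw [if_pos hRe] at hQ
              simp at hQ
            · rw [if_neg hRe] at hQ
              simp at hQ
              subst hQ
              obtain ⟨c, hc, rfl⟩ := List.mem_map.mp hP
              rw [Finset.disjoint_left]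
              intro x hx
              exact hdisj x (List.mem_cons_of_mem _
                (mem_vertsL_of_mem hc (List.mem_toFinset.mp hx)))
        · -- sizes
          intro P hP
          rcases List.mem_append.mp hP with hP | hP
          · obtain ⟨c, hc, rfl⟩ := List.mem_map.mp hP
            have hnd_c : (verts c).Nodup := by
              have := hndL.2
              obtain ⟨m1, m2, rfl⟩ := List.append_of_mem hc
              rw [vertsL_append, vertsL_cons] at this
              exact (List.nodup_append.mp (List.nodup_append.mp this).2.1).1
            rw [List.toFinset_card_of_nodup hnd_c]
            have h1 : 0 < (verts c).length := List.length_pos_iff.mpr (verts_ne_nil c)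
            have h2 := hbig c hc
            omega
          · by_cases hRe : R = ∅
            · rw [if_pos hRe] at hP
              simp at hP
            · rw [if_neg hRe] at hP
              simp at hP
              subst hP
              have : 0 < P.card := Finset.card_pos.mpr (Finset.nonempty_of_ne_empty hRe)
              omega
        · -- connectivity of sub-selections
          intro Qs hQs
          rw [List.sublist_append_iff] at hQs
          obtain ⟨q1, q2, rfl, hq1, hq2⟩ := hQs
          obtain ⟨cs', hcs', rfl⟩ := List.sublist_map_iff.mp hq1
          have hwf' : WF G (RT.node v cs') := by
            refine WF.node _ _ ?_ ?_
            · intro c hc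
              exact hwf.adj_of c (hcs'.subset hc)
            · intro c hc
              exact hwf.wf_of c (hcs'.subset hc)
          have hnd' : (verts (RT.node v cs')).Nodup := by
            rw [verts_node, List.nodup_cons]
            constructor
            · intro hx
              exact hndL.1 ((vertsL_sublist hcs').subset hx)
            · exact hndL.2.sublist (vertsL_sublist hcs')
          have hq2' : q2 = [] ∨ q2 = [R] := by
            by_cases hRe : R = ∅
            · rw [if_pos hRe] at hq2
              exact Or.inl (List.sublist_nil.mp hq2)
            · rw [if_neg hRe] at hq2
              exact List.sublist_singleton.mp hq2
          rcases hq2' with rfl | rfl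
          · -- no R part
            refine ⟨RT.node v cs', hwf', hnd', ?_⟩
            ext x
            rw [List.mem_toFinset, Finset.mem_insert, foldr_union_mem]
            rw [verts_node, List.mem_cons]
            constructor
            · rintro (rfl | hx)
              · exact Or.inl rfl
              · obtain ⟨c, hc, hxc⟩ := mem_vertsL_iff.mp hx
                refine Or.inr ⟨(verts c).toFinset, ?_, List.mem_toFinset.mpr hxc⟩
                simp only [List.append_nil, List.mem_map]
                exact ⟨c, hc, rfl⟩
            · rintro (rfl | ⟨P, hP, hxP⟩)
              · exact Or.inl rfl
              · simp only [List.append_nil, List.mem_map] at hP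
                obtain ⟨c, hc, rfl⟩ := hP
                exact Or.inr (mem_vertsL_of_mem hc (List.mem_toFinset.mp hxP))
          · -- with R part
            have hconn := HR2 (RT.node v cs') hwf' hnd' (by simp)
              (by
                intro x hx
                rw [verts_node, List.mem_cons] at hx
                rw [verts_node]
                rcases hx with rfl | hx
                · exact List.mem_cons_self
                · exact List.mem_cons_of_mem _ ((vertsL_sublist hcs').subset hx))
            have heq : R ∪ (verts (RT.node v cs')).toFinset =
                insert v (((cs'.map fun c => (verts c).toFinset) ++ [R]).foldr (· ∪ ·) ∅) := by
              ext x
              rw [Finset.mem_union, Finset.mem_insert, foldr_union_mem]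
              rw [verts_node, List.mem_toFinset, List.mem_cons]
              constructor
              · rintro (hx | rfl | hx)
                · exact Or.inr ⟨R, by simp, hx⟩
                · exact Or.inl rfl
                · obtain ⟨c, hc, hxc⟩ := mem_vertsL_iff.mp hx
                  refine Or.inr ⟨(verts c).toFinset, ?_, List.mem_toFinset.mpr hxc⟩
                  simp only [List.mem_append, List.mem_map]
                  exact Or.inl ⟨c, hc, rfl⟩
              · rintro (rfl | ⟨P, hP, hxP⟩)
                · exact Or.inr (Or.inl rfl)
                · simp only [List.mem_append, List.mem_map] at hP
                  rcases hP with ⟨c, hc, rfl⟩ | hP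
                  · exact Or.inr (Or.inr (mem_vertsL_of_mem hc (List.mem_toFinset.mp hxP)))
                  · simp at hP
                    subst hP
                    exact Or.inl hxP
            rwa [heq] at hconn

lemma foldr_inter (Qs : List (Finset V)) (SF : Finset V) :
    (Qs.foldr (· ∪ ·) ∅) ∩ SF = (Qs.map (· ∩ SF)).foldr (· ∪ ·) ∅ := by
  induction Qs with
  | nil => simp
  | cons P Qs ih =>
    simp only [List.foldr_cons, List.map_cons]
    rw [Finset.union_inter_distrib_right, ih]

lemma card_insert_foldr (v : V) (Qs : List (Finset V))
    (hpw : List.Pairwise (fun P Q => Disjoint P Q) Qs) (hv : ∀ P ∈ Qs, v ∉ P) :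
    (insert v (Qs.foldr (· ∪ ·) ∅)).card = 1 + (Qs.map Finset.card).sum := by
  rw [Finset.card_insert_of_notMem, foldr_union_card _ hpw]
  · omega
  · intro hmem
    obtain ⟨P, hP, hvP⟩ := (foldr_union_mem Qs v).mp hmem
    exact hv P hP hvP

lemma cardS_insert_foldr (SF : Finset V) (v : V) (Qs : List (Finset V))
    (hpw : List.Pairwise (fun P Q => Disjoint P Q) Qs) (hv : ∀ P ∈ Qs, v ∉ P) :
    ((insert v (Qs.foldr (· ∪ ·) ∅)) ∩ SF).card =
      (if v ∈ SF then 1 else 0) + (Qs.map fun P => (P ∩ SF).card).sum := by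
  have hpw' : List.Pairwise (fun P Q => Disjoint P Q) (Qs.map (· ∩ SF)) := by
    refine List.Pairwise.map _ ?_ hpw
    intro P Q hPQ
    exact hPQ.mono Finset.inter_subset_left Finset.inter_subset_left
  have hXS : ((Qs.foldr (· ∪ ·) ∅) ∩ SF).card = (Qs.map fun P => (P ∩ SF).card).sum := by
    rw [foldr_inter, foldr_union_card _ hpw', List.map_map]
    rfl
  by_cases hvS : v ∈ SF
  · rw [if_pos hvS]
    have heq : (insert v (Qs.foldr (· ∪ ·) ∅)) ∩ SF =
        insert v ((Qs.foldr (· ∪ ·) ∅) ∩ SF) := by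
      ext x
      simp only [Finset.mem_inter, Finset.mem_insert]
      constructor
      · rintro ⟨rfl | hx, hxS⟩
        · exact Or.inl rfl
        · exact Or.inr ⟨hx, hxS⟩
      · rintro (rfl | ⟨hx, hxS⟩)
        · exact ⟨Or.inl rfl, hvS⟩
        · exact ⟨Or.inr hx, hxS⟩
    rw [heq, Finset.card_insert_of_notMem, hXS]
    · omega
    · intro hmem
      obtain ⟨P, hP, hvP⟩ := (foldr_union_mem Qs v).mp (Finset.mem_inter.mp hmem).1
      exact hv P hP hvP
  · rw [if_neg hvS]
    have heq : (insert v (Qs.foldr (· ∪ ·) ∅)) ∩ SF = (Qs.foldr (· ∪ ·) ∅) ∩ SF := by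
      ext x
      simp only [Finset.mem_inter, Finset.mem_insert]
      constructor
      · rintro ⟨rfl | hx, hxS⟩
        · exact absurd hxS hvS
        · exact ⟨hx, hxS⟩
      · rintro ⟨hx, hxS⟩
        · exact ⟨Or.inr hx, hxS⟩
    rw [heq, hXS]
    omega

theorem main (SF : Finset V) (k t : ℕ) (hk : 1 ≤ k) (ht : 1 ≤ t) :
    ∀ (N : ℕ) (W : Finset V), W.card ≤ N → ConnA G W → t ≤ W.card →
      W.card ≤ k * (W ∩ SF).card →
      ∃ U : Finset V, ConnA G U ∧ t ≤ U.card ∧ U.card ≤ 2 * t - 1 ∧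
        U.card ≤ k * (U ∩ SF).card := by
  intro N
  induction N with
  | zero => intro W h0 _ htW _; omega
  | succ N IH =>
    intro W hWN hconnW htW hdens
    by_cases hsmall : W.card ≤ 2 * t - 1
    · exact ⟨W, hconnW, htW, hsmall, hdens⟩
    · push_neg at hsmall
      by_cases ht1 : t = 1
      · subst ht1
        have hWS : (W ∩ SF).Nonempty := by
          rw [← Finset.card_pos]
          by_contra hc
          push_neg at hc
          have h0 : (W ∩ SF).card = 0 := by omega
          rw [h0, Nat.mul_zero] at hdens
          omega
        obtain ⟨a, ha⟩ := hWS
        refine ⟨{a}, ⟨RT.node a [], WF.node _ _ (by simp) (by simp), by simp, by simp⟩,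
          by simp, by simp, ?_⟩
        have : {a} ∩ SF = {a} := by
          rw [Finset.singleton_inter_of_mem (Finset.mem_inter.mp ha).2]
        rw [this]
        simpa using hk
      · have ht2 : 2 ≤ t := by omega
        obtain ⟨T, hwfT, hndT, hTW⟩ := hconnW
        have hlenW : (verts T).length = W.card := by
          rw [← hTW, List.toFinset_card_of_nodup hndT]
        have hres := desc t ht ((verts T).length) T le_rfl hwfT hndT ∅ (by simp)
          (by omega)
          (fun T' hwf' hnd' _ _ => ⟨T', hwf', hnd', by simp⟩)
          (Or.inl rfl)
        rw [Finset.empty_union, hTW] at hres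
        rcases hres with ⟨A, B, hAB, hdisjAB, hA, hB, hcA, hcB⟩ |
          ⟨v, Ps, hcover, hvP, hpw, hPsz, hPconn⟩
        · have hcard : A.card + B.card = W.card := by
            rw [← hAB, Finset.card_union_of_disjoint hdisjAB]
          have hSplit : (A ∩ SF).card + (B ∩ SF).card = (W ∩ SF).card := by
            rw [← hAB, Finset.union_inter_distrib_right,
              Finset.card_union_of_disjoint]
            exact hdisjAB.mono Finset.inter_subset_left Finset.inter_subset_left
          have hkdist : k * (A ∩ SF).card + k * (B ∩ SF).card = k * (W ∩ SF).card := by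
            rw [← hSplit]
            ring
          have hside : A.card ≤ k * (A ∩ SF).card ∨ B.card ≤ k * (B ∩ SF).card := by
            by_contra hc
            push_neg at hc
            omega
          rcases hside with h | h
          · exact IH A (by omega) hcA hA h
          · exact IH B (by omega) hcB hB h
        · have hWcard : W.card = 1 + (Ps.map Finset.card).sum := by
            rw [hcover]
            exact card_insert_foldr v Ps hpw hvP
          have hWScard : (W ∩ SF).card =
              (if v ∈ SF then 1 else 0) + (Ps.map fun P => (P ∩ SF).card).sum := by
            rw [hcover]
            exact cardS_insert_foldr SF v Ps hpw hvP
          obtain ⟨J, hJ, hJ1, hJ2, hJ3⟩ := blocks Finset.card (fun P => (P ∩ SF).card)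
            k (if v ∈ SF then 1 else 0) t hk (by split <;> omega) ht2
            Ps.length Ps le_rfl
            (fun P hP => hPsz P hP)
            (by omega)
            (by rw [← hWScard, ← hWcard]; exact hdens)
          refine ⟨insert v (J.foldr (· ∪ ·) ∅), hPconn J hJ, ?_, ?_, ?_⟩
          · rw [card_insert_foldr v J (hpw.sublist hJ) (fun P hP => hvP P (hJ.subset hP))]
            omega
          · rw [card_insert_foldr v J (hpw.sublist hJ) (fun P hP => hvP P (hJ.subset hP))]
            omega
          · rw [card_insert_foldr v J (hpw.sublist hJ) (fun P hP => hvP P (hJ.subset hP)),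
              cardS_insert_foldr SF v J (hpw.sublist hJ) (fun P hP => hvP P (hJ.subset hP))]
            exact hJ3

end StmtAux

/-- Tree-sampling lemma: let `G` be a finite connected graph whose vertices are
partitioned into `S` and its complement, let `k ≥ 1` be an integer with
`|S| ≥ |V(G)|/k`. Then for any integer `t` with `1 ≤ t ≤ |V(G)|/2` there is a
subtree `T` of `G` with `t ≤ |V(T)| ≤ 2t − 1` in which at least a `1/k` fraction
of the vertices lie in `S`. -/
theorem stmt_3 {V : Type} [Fintype V] (G : SimpleGraph V) (hconn : G.Connected)
    (S : Set V) (k t : ℕ) (hk : 1 ≤ k)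
    (hS : (Fintype.card V : ℝ) / k ≤ S.ncard)
    (ht1 : 1 ≤ t) (ht2 : (t : ℝ) ≤ (Fintype.card V : ℝ) / 2) :
    ∃ H : G.Subgraph, H.coe.IsTree ∧ t ≤ H.verts.ncard ∧ H.verts.ncard ≤ 2 * t - 1 ∧
      (H.verts.ncard : ℝ) / k ≤ ((H.verts ∩ S).ncard : ℝ) := by
  classical
  have hkpos : (0:ℝ) < k := by exact_mod_cast hk
  have hSfin : S.Finite := S.toFinite
  set SF := hSfin.toFinset with hSF
  have hncard : S.ncard = SF.card := by
    rw [hSF, Set.ncard_eq_toFinset_card]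
  have hSk : Fintype.card V ≤ k * SF.card := by
    rw [div_le_iff₀ hkpos] at hS
    rw [hncard] at hS
    have h2 : (Fintype.card V : ℝ) ≤ (SF.card * k : ℕ) := by exact_mod_cast hS
    have h3 : Fintype.card V ≤ SF.card * k := by exact_mod_cast h2
    rw [mul_comm]
    exact h3
  have h2t : 2 * t ≤ Fintype.card V := by
    rw [le_div_iff₀ (by norm_num : (0:ℝ) < 2)] at ht2
    have h2 : (t * 2 : ℕ) ≤ (Fintype.card V : ℝ) := by exact_mod_cast ht2
    have h3 : t * 2 ≤ Fintype.card V := by exact_mod_cast h2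
    omega
  obtain ⟨T, hwfT, hndT, hTuniv⟩ := StmtAux.spanning hconn
  have hconnuniv : StmtAux.ConnA G Finset.univ := ⟨T, hwfT, hndT, hTuniv⟩
  have hunivcard : (Finset.univ : Finset V).card = Fintype.card V := Finset.card_univ
  obtain ⟨U, hUconn, hU1, hU2, hU3⟩ := StmtAux.main SF k t hk ht1 (Fintype.card V)
    Finset.univ (le_of_eq hunivcard) hconnuniv (by omega)
    (by rw [hunivcard, Finset.univ_inter]; exact hSk)
  obtain ⟨H, hHtree, hHverts⟩ := StmtAux.connA_subgraph hUconn
  refine ⟨H, hHtree, ?_, ?_, ?_⟩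
  · rw [hHverts, Set.ncard_coe_finset]; exact hU1
  · rw [hHverts, Set.ncard_coe_finset]; exact hU2
  · have hint : (↑U : Set V) ∩ S = ↑(U ∩ SF) := by
      ext x
      simp only [Set.mem_inter_iff, Finset.coe_inter, Finset.mem_coe, Finset.mem_inter,
        hSF, Set.Finite.mem_toFinset]
    rw [hHverts, hint, Set.ncard_coe_finset, Set.ncard_coe_finset]
    rw [div_le_iff₀ hkpos]
    have h2 : U.card ≤ (U ∩ SF).card * k := by
      rw [mul_comm]
      exact hU3
    exact_mod_cast h2
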